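/- arXiv:2008.06213 — 3 statements merged into one kernel-verified Lean document; each statement's English description precedes it below -/
import Mathlib

section
/- The prior distribution π(γ) = B(|γ|+1, p+q−|γ|+1) / 2^{#{j : γ_j^x > 0}} on configurations γ = (γ^x, γ^z) induces a uniform distribution on the number of included predictors: for every k with 0 ≤ k ≤ p+q, the sum of π(γ) over all configurations γ with |γ| = k equals 1/(p+q+1). -/
open Finset
open scoped Nat

/-- The Beta function `B(a,b) = ∫₀¹ t^(a-1) (1-t)^(b-1) dt`. -/
noncomputable def Beta (a b : ℝ) : ℝ :=
  ∫ t in (0:ℝ)..1, t ^ (a - 1) * (1 - t) ^ (b - 1)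

/-- Number of active (nonzero) components of `γˣ`, i.e. `#{j : γⱼˣ > 0}`. -/
def nActive {p : ℕ} (γx : Fin p → Fin 3) : ℕ :=
  (univ.filter fun j => 0 < (γx j : ℕ)).card

/-- The number of included predictors `|γ| = #{j : γⱼˣ > 0} + ∑ₖ γₖᶻ`. -/
def gammaSize {p q : ℕ} (γ : (Fin p → Fin 3) × (Fin q → Fin 2)) : ℕ :=
  nActive γ.1 + ∑ k, (γ.2 k : ℕ)

/-- The prior `π(γ) = B(|γ|+1, p+q-|γ|+1) / 2^{#{j : γⱼˣ > 0}}`. -/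
noncomputable def prior (p q : ℕ) (γ : (Fin p → Fin 3) × (Fin q → Fin 2)) : ℝ :=
  Beta ((gammaSize γ : ℝ) + 1) ((p : ℝ) + (q : ℝ) - (gammaSize γ : ℝ) + 1) /
    2 ^ nActive γ.1

lemma fact_prod (k m : ℕ) : k ! * ∏ j ∈ range (m+1), (k+1+j) = (k+m+1)! := by
  induction m with
  | zero => simp [Nat.factorial_succ, mul_comm]
  | succ m ih =>
      rw [prod_range_succ, ← mul_assoc, ih]
      have h : k+(m+1)+1 = (k+m+1)+1 := by ring
      rw [h, Nat.factorial_succ (k+m+1)]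
      ring

lemma Beta_nat (k m : ℕ) :
    Beta ((k:ℝ)+1) ((m:ℝ)+1) = (k ! : ℝ) * (m ! : ℝ) / ((k+m+1)! : ℝ) := by
  have h1 : Beta ((k:ℝ)+1) ((m:ℝ)+1) = ∫ t in (0:ℝ)..1, t ^ k * (1-t) ^ m := by
    unfold Beta
    simp [add_sub_cancel_right, Real.rpow_natCast]
  have h2 : Complex.betaIntegral ((k:ℂ)+1) ((m:ℂ)+1)
      = ((∫ t in (0:ℝ)..1, t ^ k * (1-t) ^ m : ℝ) : ℂ) := by
    rw [Complex.betaIntegral, ← intervalIntegral.integral_ofReal]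
    refine intervalIntegral.integral_congr fun x hx => ?_
    push_cast
    simp [add_sub_cancel_right, Complex.cpow_natCast]
  have h3 := Complex.betaIntegral_eval_nat_add_one_right
    (u := (k:ℂ)+1) (by simp; positivity) m
  have hc : (k ! : ℂ) * ∏ j ∈ range (m+1), ((k:ℂ)+1+(j:ℕ)) = ((k+m+1)! : ℂ) := by
    exact_mod_cast congrArg (Nat.cast : ℕ → ℂ) (fact_prod k m)
  have hk0 : (k ! : ℂ) ≠ 0 := Nat.cast_ne_zero.mpr k.factorial_ne_zero
  have hkm0 : (((k+m+1)! : ℕ) : ℂ) ≠ 0 := Nat.cast_ne_zero.mpr (k+m+1).factorial_ne_zero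
  have key : ((∫ t in (0:ℝ)..1, t ^ k * (1-t) ^ m : ℝ) : ℂ)
      = (k ! : ℂ) * (m ! : ℂ) / ((k+m+1)! : ℂ) := by
    rw [← h2, h3]
    rw [div_eq_div_iff (by
      intro h
      rw [h, mul_zero] at hc
      exact hkm0 hc.symm) hkm0]
    calc (m ! : ℂ) * ((k+m+1)! : ℂ) = (m ! : ℂ) * ((k ! : ℂ) * ∏ j ∈ range (m+1), ((k:ℂ)+1+(j:ℕ))) := by rw [hc]
    _ = (k ! : ℂ) * (m ! : ℂ) * ∏ j ∈ range (m+1), ((k:ℂ)+1+(j:ℕ)) := by ring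
  rw [h1]
  apply Complex.ofReal_inj.mp
  rw [key]
  push_cast
  ring

lemma card_fin2 (q b : ℕ) :
    (univ.filter fun f : Fin q → Fin 2 => ∑ i, (f i : ℕ) = b).card = q.choose b := by
  have hp := Finset.card_powersetCard b (univ : Finset (Fin q))
  rw [Finset.card_univ, Fintype.card_fin] at hp
  rw [← hp]
  have hsum : ∀ f : Fin q → Fin 2, ∑ i, (f i : ℕ) = (univ.filter fun i => f i = 1).card := by
    intro f
    rw [Finset.card_filter]
    refine Finset.sum_congr rfl fun i _ => ?_
    have h : ∀ x : Fin 2, (x:ℕ) = if x = 1 then 1 else 0 := by decide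
    rw [h]
  apply Finset.card_bij' (fun f _ => univ.filter fun i => f i = 1)
    (fun s _ => fun i => if i ∈ s then 1 else 0) ?hi ?hj ?left ?right
  case hi =>
    intro f hf
    simp only [mem_filter, mem_univ, true_and] at hf
    rw [Finset.mem_powersetCard]
    exact ⟨Finset.subset_univ _, by rw [← hsum f, hf]⟩
  case hj =>
    intro s hs
    simp only [mem_filter, mem_univ, true_and]
    rw [hsum]
    rw [Finset.mem_powersetCard] at hs
    rw [← hs.2]
    congr 1
    ext i
    simp only [mem_filter, mem_univ, true_and]
    constructor
    · intro h; by_contra hi; simp [hi] at h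
    · intro h; simp [h]
  case left =>
    intro f hf
    funext i
    simp only [mem_filter, mem_univ, true_and]
    have : ∀ x : Fin 2, (if x = 1 then (1 : Fin 2) else 0) = x := by decide
    rw [this]
  case right =>
    intro s hs
    ext i
    simp only [mem_filter, mem_univ, true_and]
    constructor
    · intro h; by_contra hi; simp [hi] at h
    · intro h; simp [h]

lemma card_fiber (p : ℕ) (s : Finset (Fin p)) :
    (univ.filter fun g : Fin p → Fin 3 =>
      (univ.filter fun j => 0 < (g j : ℕ)) = s).card = 2 ^ s.card := by
  have A : ∀ x : Fin 3, x ∈ ({1,2} : Finset (Fin 3)) ↔ 0 < (x:ℕ) := by decide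
  have B : ∀ x : Fin 3, x ∈ ({0} : Finset (Fin 3)) ↔ ¬ 0 < (x:ℕ) := by decide
  have hset : (univ.filter fun g : Fin p → Fin 3 =>
      (univ.filter fun j => 0 < (g j : ℕ)) = s)
      = Fintype.piFinset (fun j => if j ∈ s then ({1,2} : Finset (Fin 3)) else {0}) := by
    ext g
    simp only [mem_filter, mem_univ, true_and, Fintype.mem_piFinset, Finset.ext_iff]
    constructor
    · intro h j
      by_cases hj : j ∈ s
      · simp only [hj, if_true, A]
        have := (h j).mpr hj
        simpa using this
      · simp only [hj, if_false, B]
        intro hpos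
        exact hj ((h j).mp (by simpa using hpos))
    · intro h j
      have := h j
      by_cases hj : j ∈ s
      · simp only [hj, if_true, A] at this
        simp [hj, this]
      · simp only [hj, if_false, B] at this
        simp [hj, this]
  rw [hset, Fintype.card_piFinset]
  have : ∀ j : Fin p, (if j ∈ s then ({1,2} : Finset (Fin 3)) else {0}).card
      = if j ∈ s then 2 else 1 := by
    intro j; split_ifs <;> decide
  simp_rw [this]
  rw [Finset.prod_ite_mem, Finset.univ_inter, Finset.prod_const]

lemma card_nActive (p a : ℕ) :
    (univ.filter fun g : Fin p → Fin 3 => nActive g = a).card = p.choose a * 2 ^ a := by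
  rw [Finset.card_eq_sum_card_fiberwise
    (f := fun g => univ.filter fun j => 0 < (g j : ℕ))
    (t := Finset.powersetCard a (univ : Finset (Fin p)))
    (fun g hg => by
      simp only [mem_coe, mem_filter, mem_univ, true_and] at hg
      rw [Finset.mem_coe, Finset.mem_powersetCard]
      exact ⟨Finset.subset_univ _, hg⟩)]
  have hterm : ∀ s ∈ Finset.powersetCard a (univ : Finset (Fin p)),
      ((univ.filter fun g : Fin p → Fin 3 => nActive g = a).filter
        (fun g => (univ.filter fun j => 0 < (g j : ℕ)) = s)).card = 2 ^ a := by
    intro s hs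
    rw [Finset.mem_powersetCard] at hs
    rw [Finset.filter_filter]
    have : (univ.filter fun g : Fin p → Fin 3 =>
        nActive g = a ∧ (univ.filter fun j => 0 < (g j : ℕ)) = s)
        = univ.filter fun g : Fin p → Fin 3 =>
          (univ.filter fun j => 0 < (g j : ℕ)) = s := by
      ext g
      simp only [mem_filter, mem_univ, true_and]
      constructor
      · exact fun h => h.2
      · intro h
        refine ⟨?_, h⟩
        rw [nActive, h, hs.2]
    rw [this, card_fiber, hs.2]
  rw [Finset.sum_congr rfl hterm, Finset.sum_const, Finset.card_powersetCard,
    Finset.card_univ, Fintype.card_fin, smul_eq_mul]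

lemma vander (p q k : ℕ) :
    ∑ a ∈ range (p+1), p.choose a * (if a ≤ k then q.choose (k-a) else 0)
      = (p+q).choose k := by
  rw [Nat.add_choose_eq, Finset.Nat.sum_antidiagonal_eq_sum_range_succ_mk]
  have h1 : ∑ a ∈ range (p+1), p.choose a * (if a ≤ k then q.choose (k-a) else 0)
      = ∑ a ∈ range (p+k+1), p.choose a * (if a ≤ k then q.choose (k-a) else 0) := by
    apply Finset.sum_subset (Finset.range_subset_range.mpr (by omega))
    intro a _ ha
    rw [Finset.mem_range, not_lt] at ha
    rw [Nat.choose_eq_zero_of_lt (by omega), zero_mul]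
  have h2 : ∑ i ∈ range (k+1), (p.choose i * q.choose (k-i))
      = ∑ a ∈ range (p+k+1), p.choose a * (if a ≤ k then q.choose (k-a) else 0) := by
    rw [Finset.sum_congr rfl (fun i hi => ?_)]
    · apply Finset.sum_subset (Finset.range_subset_range.mpr (by omega))
      intro a _ ha
      rw [Finset.mem_range, not_lt] at ha
      rw [if_neg (by omega), mul_zero]
    · rw [Finset.mem_range] at hi
      rw [if_pos (by omega)]
  rw [h1, ← h2]

lemma weighted_count (p q k : ℕ) :
    ∑ γ ∈ univ.filter (fun γ : (Fin p → Fin 3) × (Fin q → Fin 2) => gammaSize γ = k),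
      ((2:ℝ)⁻¹) ^ nActive γ.1 = ((p+q).choose k : ℝ) := by
  rw [Finset.sum_filter, Fintype.sum_prod_type]
  have inner : ∀ x : Fin p → Fin 3, (∑ z : Fin q → Fin 2,
      if gammaSize (x, z) = k then ((2:ℝ)⁻¹) ^ nActive x else 0)
      = ((2:ℝ)⁻¹) ^ nActive x *
        (if nActive x ≤ k then (q.choose (k - nActive x) : ℝ) else 0) := by
    intro x
    rw [← Finset.sum_filter, Finset.sum_const, nsmul_eq_mul]
    by_cases h : nActive x ≤ k
    · have he : (univ.filter fun z : Fin q → Fin 2 => gammaSize (x,z) = k)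
          = univ.filter fun z : Fin q → Fin 2 => ∑ i, (z i : ℕ) = k - nActive x := by
        apply Finset.filter_congr
        intro z _
        simp only [gammaSize]
        omega
      rw [he, card_fin2, if_pos h, mul_comm]
    · have he : (univ.filter fun z : Fin q → Fin 2 => gammaSize (x,z) = k) = ∅ := by
        ext z
        simp only [mem_filter, mem_univ, true_and, Finset.notMem_empty, iff_false,
          gammaSize]
        omega
      rw [he, if_neg h, Finset.card_empty, Nat.cast_zero, zero_mul, mul_zero]
  rw [Finset.sum_congr rfl fun x _ => inner x]
  rw [Finset.sum_comp (fun a => ((2:ℝ)⁻¹) ^ a *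
    (if a ≤ k then (q.choose (k - a) : ℝ) else 0)) nActive]
  have hsub : (univ : Finset (Fin p → Fin 3)).image nActive ⊆ range (p+1) := by
    intro b hb
    rw [Finset.mem_image] at hb
    obtain ⟨g, _, hg⟩ := hb
    rw [Finset.mem_range]
    have : nActive g ≤ p := by
      rw [nActive]
      exact le_trans (Finset.card_filter_le _ _) (by simp)
    omega
  rw [Finset.sum_subset hsub (fun b _ hb => ?_)]
  · calc ∑ b ∈ range (p+1),
        (univ.filter fun g : Fin p → Fin 3 => nActive g = b).card •
          (((2:ℝ)⁻¹) ^ b * (if b ≤ k then (q.choose (k - b) : ℝ) else 0))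
        = ∑ b ∈ range (p+1), (p.choose b : ℝ) *
          (if b ≤ k then (q.choose (k - b) : ℝ) else 0) := by
          refine Finset.sum_congr rfl fun b _ => ?_
          rw [card_nActive, nsmul_eq_mul]
          have h2 : ((2:ℝ)) ^ b * ((2:ℝ)⁻¹) ^ b = 1 := by
            rw [← mul_pow]; norm_num
          push_cast
          split_ifs with hb
          · linear_combination ((p.choose b : ℝ) * (q.choose (k - b) : ℝ)) * h2
          · ring
      _ = ((p+q).choose k : ℝ) := by
          rw [← vander p q k]
          push_cast [apply_ite (Nat.cast : ℕ → ℝ)]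
          rfl
  · have : (univ.filter fun g : Fin p → Fin 3 => nActive g = b) = ∅ := by
      ext g
      simp only [mem_filter, mem_univ, true_and, Finset.notMem_empty, iff_false]
      intro hg
      exact hb (Finset.mem_image.mpr ⟨g, Finset.mem_univ g, hg⟩)
    rw [this, Finset.card_empty, zero_smul]

/-- The prior induces a uniform distribution on the number of included predictors:
for every `0 ≤ k ≤ p + q`, `Pr(|γ| = k) = 1/(p+q+1)`. -/
theorem prior_size_uniform (p q k : ℕ) (hk : k ≤ p + q) :
    ∑ γ ∈ univ.filter (fun γ : (Fin p → Fin 3) × (Fin q → Fin 2) => gammaSize γ = k),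
      prior p q γ = 1 / ((p : ℝ) + (q : ℝ) + 1) := by
  set m := p + q - k with hm
  have hme : (p:ℝ) + (q:ℝ) - (k:ℝ) + 1 = (m:ℝ) + 1 := by
    rw [hm]; push_cast [Nat.cast_sub hk]; ring
  have step1 : ∑ γ ∈ univ.filter
        (fun γ : (Fin p → Fin 3) × (Fin q → Fin 2) => gammaSize γ = k), prior p q γ
      = Beta ((k:ℝ)+1) ((m:ℝ)+1) * ∑ γ ∈ univ.filter
        (fun γ : (Fin p → Fin 3) × (Fin q → Fin 2) => gammaSize γ = k),
          ((2:ℝ)⁻¹) ^ nActive γ.1 := by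
    rw [Finset.mul_sum]
    refine Finset.sum_congr rfl fun γ hγ => ?_
    rw [Finset.mem_filter] at hγ
    rw [prior, hγ.2, hme, div_eq_mul_inv, ← inv_pow, mul_comm]
  rw [step1, weighted_count, Beta_nat]
  have hch : (((p+q).choose k : ℕ) : ℝ) * (k ! : ℝ) * (m ! : ℝ) = ((p+q)! : ℝ) := by
    exact_mod_cast congrArg (Nat.cast (R := ℝ)) (Nat.choose_mul_factorial_mul_factorial hk)
  have hf : ((k+m+1)! : ℝ) = ((p:ℝ)+(q:ℝ)+1) * ((p+q)! : ℝ) := by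
    rw [show k+m+1 = (p+q)+1 by omega, Nat.factorial_succ]; push_cast; ring
  have hne : ((p:ℝ)+(q:ℝ)+1) ≠ 0 := by positivity
  have hfe : ((k+m+1)! : ℝ) ≠ 0 := Nat.cast_ne_zero.mpr (Nat.factorial_ne_zero _)
  rw [div_mul_eq_mul_div, div_eq_div_iff hfe hne]
  linear_combination ((p:ℝ)+(q:ℝ)+1) * hch - hf
end

section
/- Under the prior π(γ) = B(|γ|+1, p+q−|γ|+1) / 2^{#{j : γ_j^x > 0}}, for each fixed index j with 1 ≤ j ≤ p, the marginal probabilities of a linear and of a nonlinear effect are equal and both equal 1/4; that is, the sum of π(γ) over all configurations γ with γ_j^x = 1 equals 1/4, and likewise the sum over all configurations with γ_j^x = 2 equals 1/4. -/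
open Finset

namespace PriorAux

noncomputable def fX (t : ℝ) (a : Fin 3) : ℝ := if a = 0 then 1 - t else t / 2
noncomputable def fZ (t : ℝ) (b : Fin 2) : ℝ := if b = 0 then 1 - t else t

lemma sum_fX (t : ℝ) : ∑ a : Fin 3, fX t a = 1 := by
  simp [Fin.sum_univ_three, fX]; ring

lemma sum_fZ (t : ℝ) : ∑ b : Fin 2, fZ t b = 1 := by
  simp [Fin.sum_univ_two, fZ]

lemma fX_cont (a : Fin 3) : Continuous fun t : ℝ => fX t a := by
  unfold fX; by_cases h : a = 0 <;> simp only [h, if_true, if_false] <;> fun_prop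

lemma fZ_cont (b : Fin 2) : Continuous fun t : ℝ => fZ t b := by
  unfold fZ; by_cases h : b = 0 <;> simp only [h, if_true, if_false] <;> fun_prop

lemma nActive_le {p : ℕ} (γx : Fin p → Fin 3) : nActive γx ≤ p := by
  simpa [nActive] using (Finset.card_filter_le univ fun j => 0 < (γx j : ℕ))

lemma sumZ_le {q : ℕ} (γz : Fin q → Fin 2) : ∑ k, (γz k : ℕ) ≤ q := by
  calc ∑ k, (γz k : ℕ) ≤ ∑ _k : Fin q, 1 :=
        Finset.sum_le_sum fun k _ => (γz k).is_le
    _ = q := by simp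

lemma gammaSize_le {p q : ℕ} (γ : (Fin p → Fin 3) × (Fin q → Fin 2)) :
    gammaSize γ ≤ p + q := by
  have := nActive_le γ.1
  have := sumZ_le γ.2
  unfold gammaSize; omega

lemma card_zero_X {p : ℕ} (γx : Fin p → Fin 3) :
    (univ.filter fun i => γx i = 0).card = p - nActive γx := by
  have h := Finset.card_filter_add_card_filter_not
    (s := (univ : Finset (Fin p))) (p := fun i => γx i = 0)
  have h2 : (univ.filter fun i => ¬ γx i = 0).card = nActive γx := by
    unfold nActive
    congr 1
    apply Finset.filter_congr
    intro i _
    rw [Nat.pos_iff_ne_zero, Ne, Fin.val_eq_zero_iff]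
  simp only [Finset.card_univ, Fintype.card_fin] at h
  omega

lemma prodX (t : ℝ) {p : ℕ} (γx : Fin p → Fin 3) :
    ∏ i, fX t (γx i) = (1 - t) ^ (p - nActive γx) * (t / 2) ^ nActive γx := by
  have : (∏ i, fX t (γx i))
      = ∏ i, (if γx i = 0 then (1 - t) else (t / 2)) := rfl
  rw [this, Finset.prod_ite, Finset.prod_const, Finset.prod_const, card_zero_X]
  congr 2
  unfold nActive
  congr 1
  apply Finset.filter_congr
  intro i _
  rw [Nat.pos_iff_ne_zero, Ne, Fin.val_eq_zero_iff]

lemma sumZ_eq {q : ℕ} (γz : Fin q → Fin 2) :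
    ∑ k, (γz k : ℕ) = (univ.filter fun k => ¬ γz k = 0).card := by
  rw [Finset.card_filter]
  apply Finset.sum_congr rfl
  intro k _
  generalize γz k = b
  fin_cases b <;> simp

lemma card_zero_Z {q : ℕ} (γz : Fin q → Fin 2) :
    (univ.filter fun k => γz k = 0).card = q - ∑ k, (γz k : ℕ) := by
  have h := Finset.card_filter_add_card_filter_not
    (s := (univ : Finset (Fin q))) (p := fun k => γz k = 0)
  simp only [Finset.card_univ, Fintype.card_fin] at h
  rw [sumZ_eq]
  omega

lemma prodZ (t : ℝ) {q : ℕ} (γz : Fin q → Fin 2) :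
    ∏ k, fZ t (γz k) = (1 - t) ^ (q - ∑ k, (γz k : ℕ)) * t ^ (∑ k, (γz k : ℕ)) := by
  have : (∏ k, fZ t (γz k))
      = ∏ k, (if γz k = 0 then (1 - t) else t) := rfl
  rw [this, Finset.prod_ite, Finset.prod_const, Finset.prod_const, card_zero_Z, sumZ_eq]

lemma point (t : ℝ) {p q : ℕ} (γ : (Fin p → Fin 3) × (Fin q → Fin 2)) :
    t ^ gammaSize γ * (1 - t) ^ (p + q - gammaSize γ) / 2 ^ nActive γ.1
      = (∏ i, fX t (γ.1 i)) * ∏ k, fZ t (γ.2 k) := by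
  rw [prodX, prodZ]
  have hA := nActive_le γ.1
  have hb := sumZ_le γ.2
  rw [show p + q - gammaSize γ
      = (p - nActive γ.1) + (q - ∑ k, (γ.2 k : ℕ)) by unfold gammaSize; omega]
  unfold gammaSize
  rw [pow_add, pow_add, div_pow]
  ring

lemma prior_eq (p q : ℕ) (γ : (Fin p → Fin 3) × (Fin q → Fin 2)) :
    prior p q γ = ∫ t in (0:ℝ)..1,
      t ^ gammaSize γ * (1 - t) ^ (p + q - gammaSize γ) / 2 ^ nActive γ.1 := by
  unfold prior Beta
  rw [intervalIntegral.integral_div]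
  congr 1
  apply intervalIntegral.integral_congr
  intro t _
  have hs : gammaSize γ ≤ p + q := gammaSize_le γ
  have e1 : (gammaSize γ : ℝ) + 1 - 1 = ((gammaSize γ : ℕ) : ℝ) := by ring
  have e2 : (p : ℝ) + (q : ℝ) - (gammaSize γ : ℝ) + 1 - 1
      = ((p + q - gammaSize γ : ℕ) : ℝ) := by
    rw [Nat.cast_sub hs]; push_cast; ring
  simp only [e1, e2, Real.rpow_natCast]

lemma sumProdZ (t : ℝ) (q : ℕ) :
    ∑ γz : Fin q → Fin 2, ∏ k, fZ t (γz k) = 1 := by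
  classical
  rw [← Fintype.piFinset_univ, ← Finset.prod_univ_sum]
  simp only [Fin.sum_univ_two]
  rw [show fZ t 0 + fZ t 1 = 1 by simp [fZ]]
  exact Finset.prod_const_one

lemma fX_ne (t : ℝ) {c : Fin 3} (hc : c ≠ 0) : fX t c = t / 2 := by
  unfold fX; rw [if_neg hc]

noncomputable def gfun (t : ℝ) {p : ℕ} (j : Fin p) (c : Fin 3) : Fin p → Fin 3 → ℝ :=
  fun i a => if i = j then (if a = c then fX t a else 0) else fX t a

lemma sumProdX (t : ℝ) {p : ℕ} (j : Fin p) (c : Fin 3) (hc : c ≠ 0) :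
    ∑ γx : Fin p → Fin 3, (if γx j = c then ∏ i, fX t (γx i) else 0) = t / 2 := by
  classical
  have key : ∀ γx : Fin p → Fin 3,
      (if γx j = c then ∏ i, fX t (γx i) else 0)
      = ∏ i, gfun t j c i (γx i) := by
    intro γx
    unfold gfun
    by_cases h : γx j = c
    · rw [if_pos h]
      apply Finset.prod_congr rfl
      intro i _
      by_cases hij : i = j
      · subst hij; simp [h]
      · simp [hij]
    · rw [if_neg h]
      symm
      apply Finset.prod_eq_zero (Finset.mem_univ j)
      simp [h]
  simp_rw [key]
  rw [← Fintype.piFinset_univ, ← Finset.prod_univ_sum]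
  have hfac : ∀ i : Fin p,
      (∑ a : Fin 3, gfun t j c i a)
      = if i = j then t / 2 else 1 := by
    intro i
    unfold gfun
    by_cases hij : i = j
    · simp only [hij, if_true]
      rw [Finset.sum_ite_eq' univ c (fX t)]
      simp [fX_ne t hc]
    · simp only [hij, if_false]
      exact sum_fX t
  calc (∏ i : Fin p, ∑ a : Fin 3, gfun t j c i a)
      = ∏ i : Fin p, (if i = j then t / 2 else 1) := by
        exact Finset.prod_congr rfl fun i _ => hfac i
    _ = t / 2 := by
        rw [Finset.prod_eq_single j (fun i _ hij => by simp [hij]) (by simp)]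
        simp

lemma inner_sum (t : ℝ) {p q : ℕ} (j : Fin p) (c : Fin 3) (hc : c ≠ 0) :
    ∑ γ ∈ univ.filter (fun γ : (Fin p → Fin 3) × (Fin q → Fin 2) => γ.1 j = c),
      (∏ i, fX t (γ.1 i)) * ∏ k, fZ t (γ.2 k) = t / 2 := by
  classical
  rw [Finset.sum_filter, Fintype.sum_prod_type]
  have step : ∀ γx : Fin p → Fin 3,
      (∑ γz : Fin q → Fin 2,
        if γx j = c then (∏ i, fX t (γx i)) * ∏ k, fZ t (γz k) else 0)
      = (if γx j = c then ∏ i, fX t (γx i) else 0) := by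
    intro γx
    by_cases h : γx j = c
    · simp only [h, if_true, ← Finset.mul_sum, sumProdZ, mul_one]
    · simp [h]
  simp_rw [step]
  exact sumProdX t j c hc

lemma sum_eq (p q : ℕ) (j : Fin p) (c : Fin 3) (hc : c ≠ 0) :
    ∑ γ ∈ univ.filter (fun γ : (Fin p → Fin 3) × (Fin q → Fin 2) => γ.1 j = c),
      prior p q γ = 1 / 4 := by
  classical
  have cont : ∀ γ : (Fin p → Fin 3) × (Fin q → Fin 2),
      Continuous fun t : ℝ => (∏ i, fX t (γ.1 i)) * ∏ k, fZ t (γ.2 k) := by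
    intro γ
    exact (continuous_finset_prod _ fun i _ => fX_cont (γ.1 i)).mul
      (continuous_finset_prod _ fun k _ => fZ_cont (γ.2 k))
  calc ∑ γ ∈ univ.filter (fun γ : (Fin p → Fin 3) × (Fin q → Fin 2) => γ.1 j = c),
        prior p q γ
      = ∑ γ ∈ univ.filter (fun γ : (Fin p → Fin 3) × (Fin q → Fin 2) => γ.1 j = c),
          ∫ t in (0:ℝ)..1, (∏ i, fX t (γ.1 i)) * ∏ k, fZ t (γ.2 k) := by
        apply Finset.sum_congr rfl
        intro γ _
        rw [prior_eq]
        apply intervalIntegral.integral_congr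
        intro t _
        exact point t γ
    _ = ∫ t in (0:ℝ)..1,
          ∑ γ ∈ univ.filter (fun γ : (Fin p → Fin 3) × (Fin q → Fin 2) => γ.1 j = c),
            (∏ i, fX t (γ.1 i)) * ∏ k, fZ t (γ.2 k) :=
        (intervalIntegral.integral_finset_sum
          (fun γ _ => (cont γ).intervalIntegrable 0 1)).symm
    _ = ∫ t in (0:ℝ)..1, t / 2 := by
        apply intervalIntegral.integral_congr
        intro t _
        exact inner_sum t j c hc
    _ = 1 / 4 := by
        rw [intervalIntegral.integral_div, integral_id]
        norm_num

end PriorAux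

/-- For each fixed index `j`, the marginal probabilities of a linear effect (`γⱼˣ = 1`)
and of a nonlinear effect (`γⱼˣ = 2`) both equal `1/4`. -/
theorem prior_marginal_x_one_two (p q : ℕ) (hp : 1 ≤ p) (j : Fin p) :
    (∑ γ ∈ univ.filter (fun γ : (Fin p → Fin 3) × (Fin q → Fin 2) => γ.1 j = 1),
      prior p q γ = 1 / 4) ∧
    (∑ γ ∈ univ.filter (fun γ : (Fin p → Fin 3) × (Fin q → Fin 2) => γ.1 j = 2),
      prior p q γ = 1 / 4) := by
  exact ⟨PriorAux.sum_eq p q j 1 (by decide), PriorAux.sum_eq p q j 2 (by decide)⟩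
end

section
/- The prior π(γ) = B(|γ|+1, p+q−|γ|+1) / 2^{#{j : γ_j^x > 0}} is a probability distribution: the sum of π(γ) over all configurations γ (i.e., over all γ^x ∈ {0,1,2}^p and γ^z ∈ {0,1}^q) equals 1. -/
open Finset

lemma pascal_sum (n : ℕ) (F : ℕ → ℝ) :
    ∑ k ∈ range (n + 2), ((n + 1).choose k : ℝ) * F k
      = ∑ k ∈ range (n + 1), (n.choose k : ℝ) * (F k + F (k + 1)) := by
  rw [Finset.sum_range_succ' (fun k => ((n + 1).choose k : ℝ) * F k) (n + 1)]
  have h1 : ∀ k, (((n + 1).choose (k+1) : ℝ) * F (k+1))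
      = (n.choose k : ℝ) * F (k+1) + (n.choose (k+1) : ℝ) * F (k+1) := by
    intro k; rw [Nat.choose_succ_succ]; push_cast; ring
  simp only [h1, Finset.sum_add_distrib, mul_add]
  have h2 : ∑ k ∈ range (n + 1), (n.choose (k+1) : ℝ) * F (k+1)
      + ((n.choose 0 : ℝ)) * F 0
      = ∑ k ∈ range (n + 2), (n.choose k : ℝ) * F k := by
    rw [Finset.sum_range_succ' (fun k => (n.choose k : ℝ) * F k) (n + 1)]
  have h3 : ∑ k ∈ range (n + 2), (n.choose k : ℝ) * F k
      = ∑ k ∈ range (n + 1), (n.choose k : ℝ) * F k := by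
    rw [Finset.sum_range_succ, Nat.choose_succ_self]; simp
  have h4 : ((n + 1).choose 0 : ℝ) * F 0 = ((n.choose 0 : ℝ)) * F 0 := by simp
  rw [h4, add_assoc, h2, h3]
  ring

lemma nActive' (p : ℕ) (c : Fin 3) (γ : Fin p → Fin 3) :
    (Finset.univ.filter fun j : Fin (p+1) =>
        0 < ((Fin.cons (α := fun _ => Fin 3) c γ) j : ℕ)).card
      = (if 0 < (c : ℕ) then 1 else 0)
        + (Finset.univ.filter fun j => 0 < (γ j : ℕ)).card := by
  rw [Finset.card_filter, Finset.card_filter, Fin.sum_univ_succ]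
  simp

lemma sumA (q : ℕ) : ∀ F : ℕ → ℝ,
    (∑ γz : Fin q → Fin 2, F (∑ k, (γz k : ℕ)))
      = ∑ j ∈ range (q + 1), (q.choose j : ℝ) * F j := by
  induction q with
  | zero => intro F; simp
  | succ q ih =>
    intro F
    rw [← Equiv.sum_comp (Fin.consEquiv (fun _ : Fin (q+1) => Fin 2))
        (fun γz => F (∑ k, (γz k : ℕ))), Fintype.sum_prod_type]
    have hc : ∀ (c : Fin 2) (γ : Fin q → Fin 2),
        (∑ k, ((Fin.consEquiv (fun _ : Fin (q+1) => Fin 2)) (c, γ) k : ℕ))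
          = (c : ℕ) + ∑ k, (γ k : ℕ) := by
      intro c γ; simp [Fin.consEquiv, Fin.sum_univ_succ]
    simp only [hc]
    rw [Fin.sum_univ_two]
    simp only [Fin.val_zero, Fin.val_one, zero_add]
    rw [← Finset.sum_add_distrib]
    have hgoal : ∀ s, F (1 + s) = F (s + 1) := fun s => by rw [Nat.add_comm]
    simp only [hgoal]
    exact (ih _).trans (pascal_sum q F).symm

lemma sumD (p q : ℕ) : ∀ F : ℕ → ℝ,
    (∑ γ : (Fin p → Fin 3) × (Fin q → Fin 2),
        F (gammaSize γ) / 2 ^ nActive γ.1)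
      = ∑ k ∈ range (p + q + 1), ((p + q).choose k : ℝ) * F k := by
  induction p with
  | zero =>
    intro F
    rw [Fintype.sum_prod_type, Fintype.sum_unique]
    simp only [gammaSize, nActive, Finset.univ_eq_empty, Finset.filter_empty,
      Finset.card_empty, pow_zero, div_one, Nat.zero_add]
    exact sumA q F
  | succ p ih =>
    intro F
    rw [← Equiv.sum_comp ((Fin.consEquiv (fun _ : Fin (p+1) => Fin 3)).prodCongr
          (Equiv.refl (Fin q → Fin 2)))
        (fun γ => F (gammaSize γ) / 2 ^ nActive γ.1),
        Fintype.sum_prod_type, Fintype.sum_prod_type]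
    have hact : ∀ (c : Fin 3) (x : Fin p → Fin 3),
        nActive (Fin.cons (α := fun _ => Fin 3) c x)
          = (if 0 < (c : ℕ) then 1 else 0) + nActive x := fun c x => nActive' p c x
    have hsize : ∀ (c : Fin 3) (x : Fin p → Fin 3) (z : Fin q → Fin 2),
        gammaSize (Fin.cons (α := fun _ => Fin 3) c x, z)
          = (if 0 < (c : ℕ) then 1 else 0) + gammaSize (x, z) := by
      intro c x z
      simp only [gammaSize, hact]
      omega
    simp only [Equiv.prodCongr_apply, Equiv.coe_refl, Prod.map_apply, id_eq,
      Fin.consEquiv, Equiv.coe_fn_mk, hact, hsize]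
    rw [Fin.sum_univ_three]
    norm_num
    have hterm : ∀ (g n : ℕ),
        F g / 2 ^ n + F (1 + g) / 2 ^ (1 + n) + F (1 + g) / 2 ^ (1 + n)
          = (F g + F (g + 1)) / 2 ^ n := by
      intro g n
      rw [Nat.add_comm 1 g, Nat.add_comm 1 n, pow_succ]
      have h2 : (2:ℝ) ^ n ≠ 0 := by positivity
      field_simp
      ring
    simp only [← Finset.sum_add_distrib, hterm]
    have hpq : p + 1 + q = p + q + 1 := by omega
    rw [hpq]
    exact (Fintype.sum_prod_type
        (f := fun γ : (Fin p → Fin 3) × (Fin q → Fin 2) =>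
          (F (gammaSize γ) + F (gammaSize γ + 1)) / 2 ^ nActive γ.1)).symm.trans
      ((ih (fun k => F k + F (k + 1))).trans (pascal_sum (p + q) F).symm)

lemma beta_nat (n k : ℕ) (hk : k ≤ n) :
    Beta ((k:ℝ)+1) ((n:ℝ)-(k:ℝ)+1) = ∫ t in (0:ℝ)..1, t ^ k * (1-t)^(n-k) := by
  refine intervalIntegral.integral_congr (fun t _ => ?_)
  rw [add_sub_cancel_right, add_sub_cancel_right, ← Nat.cast_sub hk,
    Real.rpow_natCast, Real.rpow_natCast]

lemma beta_sum (n : ℕ) :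
    ∑ k ∈ range (n+1), ((n.choose k : ℝ)) * Beta ((k:ℝ)+1) ((n:ℝ)-(k:ℝ)+1) = 1 := by
  have h1 : ∀ k ∈ range (n+1), (n.choose k : ℝ) * Beta ((k:ℝ)+1) ((n:ℝ)-(k:ℝ)+1)
      = ∫ t in (0:ℝ)..1, t ^ k * (1-t)^(n-k) * (n.choose k : ℝ) := by
    intro k hk
    rw [beta_nat n k (Nat.lt_succ_iff.mp (mem_range.mp hk)),
      ← intervalIntegral.integral_const_mul]
    refine intervalIntegral.integral_congr (fun t _ => ?_)
    ring
  rw [Finset.sum_congr rfl h1, ← intervalIntegral.integral_finset_sum]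
  · have h2 : ∀ t : ℝ, ∑ k ∈ range (n+1), t^k*(1-t)^(n-k)*(n.choose k:ℝ) = 1 := by
      intro t
      rw [← add_pow t (1-t) n]
      norm_num
    rw [intervalIntegral.integral_congr (g := fun _ => (1:ℝ)) (fun t _ => h2 t)]
    simp
  · intro k hk
    exact (by continuity :
      Continuous fun t : ℝ => t^k*(1-t)^(n-k)*(n.choose k:ℝ)).intervalIntegrable 0 1

/-- The prior `π(γ)` is a probability distribution: it sums to one over all
configurations `γ = (γˣ, γᶻ)` with `γˣ ∈ {0,1,2}^p` and `γᶻ ∈ {0,1}^q`. -/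
theorem prior_sums_to_one (p q : ℕ) :
    ∑ γ : (Fin p → Fin 3) × (Fin q → Fin 2), prior p q γ = 1 := by
  have h := sumD p q
    (fun k => Beta ((k:ℝ)+1) ((p:ℝ)+(q:ℝ)-(k:ℝ)+1))
  have h2 : ∑ k ∈ range (p+q+1),
      ((p+q).choose k : ℝ) * Beta ((k:ℝ)+1) ((p:ℝ)+(q:ℝ)-(k:ℝ)+1) = 1 := by
    have h3 := beta_sum (p+q)
    rw [Nat.cast_add] at h3
    exact h3
  exact h.trans h2
end
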